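/- arXiv:2305.16021 — 6 statements merged into one kernel-verified Lean document; each statement's English description precedes it below -/
import Mathlib

section
/- If two pointed LHS-models ⟨M,s,t⟩ and ⟨M',s',t'⟩ are LHS-bisimilar, then they satisfy exactly the same LHS formulas. -/
inductive LHSForm : Type
  | pl : ℕ → LHSForm
  | pr : ℕ → LHSForm
  | I : LHSForm
  | neg : LHSForm → LHSForm
  | and : LHSForm → LHSForm → LHSForm
  | box : LHSForm → LHSForm
  | bbox : LHSForm → LHSForm
  deriving DecidableEq

def LHSForm.or (φ ψ : LHSForm) : LHSForm := .neg (.and φ.neg ψ.neg)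
def LHSForm.imp (φ ψ : LHSForm) : LHSForm := .neg (.and φ ψ.neg)
def LHSForm.iff (φ ψ : LHSForm) : LHSForm := .and (φ.imp ψ) (ψ.imp φ)
def LHSForm.dia (φ : LHSForm) : LHSForm := .neg (.box φ.neg)
def LHSForm.bdia (φ : LHSForm) : LHSForm := .neg (.bbox φ.neg)

structure LHSModel where
  W : Type
  R : W → W → Prop
  Vl : ℕ → W → Prop
  Vr : ℕ → W → Prop

def LHSModel.sat (M : LHSModel) : M.W → M.W → LHSForm → Prop
  | s, _, .pl i => M.Vl i s
  | _, t, .pr i => M.Vr i t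
  | s, t, .I => s = t
  | s, t, .neg φ => ¬ M.sat s t φ
  | s, t, .and φ ψ => M.sat s t φ ∧ M.sat s t ψ
  | s, t, .box φ => ∀ s', M.R s s' → M.sat s' t φ
  | s, t, .bbox φ => ∀ t', M.R t t' → M.sat s t' φ

/-- Z is an LHS-bisimulation between M and M'. -/
def IsBisim (M M' : LHSModel) (Z : M.W × M.W → M'.W × M'.W → Prop) : Prop :=
  ∀ s t s' t', Z (s, t) (s', t') →
    (∀ i, M.Vl i s ↔ M'.Vl i s') ∧
    (∀ i, M.Vr i t ↔ M'.Vr i t') ∧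
    (s = t ↔ s' = t') ∧
    (∀ v, M.R s v → ∃ v', M'.R s' v' ∧ Z (v, t) (v', t')) ∧
    (∀ v, M.R t v → ∃ v', M'.R t' v' ∧ Z (s, v) (s', v')) ∧
    (∀ v', M'.R s' v' → ∃ v, M.R s v ∧ Z (v, t) (v', t')) ∧
    (∀ v', M'.R t' v' → ∃ v, M.R t v ∧ Z (s, v) (s', v'))

/-- If two pointed LHS-models are LHS-bisimilar, then they satisfy exactly the
same LHS formulas. -/
theorem bisim_implies_modal_equivalence (M M' : LHSModel)
    (Z : M.W × M.W → M'.W × M'.W → Prop) (hZ : IsBisim M M' Z)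
    (s t : M.W) (s' t' : M'.W) (hst : Z (s, t) (s', t')) :
    ∀ φ : LHSForm, M.sat s t φ ↔ M'.sat s' t' φ := by
  intro φ
  induction φ generalizing s t s' t' with
  | pl i => exact (hZ s t s' t' hst).1 i
  | pr i => exact (hZ s t s' t' hst).2.1 i
  | I => exact (hZ s t s' t' hst).2.2.1
  | neg φ ih => exact not_congr (ih s t s' t' hst)
  | and φ ψ ih1 ih2 => exact and_congr (ih1 s t s' t' hst) (ih2 s t s' t' hst)
  | box φ ih =>
    obtain ⟨-, -, -, hf, -, hb, -⟩ := hZ s t s' t' hst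
    constructor
    · intro h v' hv'
      obtain ⟨v, hv, hZv⟩ := hb v' hv'
      exact (ih v t v' t' hZv).1 (h v hv)
    · intro h v hv
      obtain ⟨v', hv', hZv⟩ := hf v hv
      exact (ih v t v' t' hZv).2 (h v' hv')
  | bbox φ ih =>
    obtain ⟨-, -, -, -, hf, -, hb⟩ := hZ s t s' t' hst
    constructor
    · intro h v' hv'
      obtain ⟨v, hv, hZv⟩ := hb v' hv'
      exact (ih s v s' v' hZv).1 (h v hv)
    · intro h v hv
      obtain ⟨v', hv', hZv⟩ := hf v hv
      exact (ih s v s' v' hZv).2 (h v' hv')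
end

section
/- The first-order standard translation for LHS is correct: for every LHS formula φ and every pointed model ⟨M,s,t⟩, M,s,t ⊨ φ (in the two-dimensional LHS semantics) if and only if M ⊨ T_{x,y}(φ)[s,t] in first-order logic. -/
/-- First-order correspondence language: unary predicates P^l_i, P^r_i,
binary relation R, equality; variables are natural numbers. -/
inductive FOForm : Type
  | pl : ℕ → ℕ → FOForm
  | pr : ℕ → ℕ → FOForm
  | rel : ℕ → ℕ → FOForm
  | eq : ℕ → ℕ → FOForm
  | neg : FOForm → FOForm
  | and : FOForm → FOForm → FOForm
  | imp : FOForm → FOForm → FOForm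
  | all : ℕ → FOForm → FOForm

/-- First-order satisfaction in an LHS model viewed as an L¹-structure. -/
def FOsat (M : LHSModel) : (ℕ → M.W) → FOForm → Prop
  | g, .pl i x => M.Vl i (g x)
  | g, .pr i y => M.Vr i (g y)
  | g, .rel x y => M.R (g x) (g y)
  | g, .eq x y => g x = g y
  | g, .neg α => ¬ FOsat M g α
  | g, .and α β => FOsat M g α ∧ FOsat M g β
  | g, .imp α β => FOsat M g α → FOsat M g β
  | g, .all x α => ∀ w, FOsat M (Function.update g x w) α

/-- Free variables of a first-order formula. -/
def FOForm.freeVars : FOForm → Set ℕ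
  | .pl _ x => {x}
  | .pr _ y => {y}
  | .rel x y => {x, y}
  | .eq x y => {x, y}
  | .neg α => α.freeVars
  | .and α β => α.freeVars ∪ β.freeVars
  | .imp α β => α.freeVars ∪ β.freeVars
  | .all x α => α.freeVars \ {x}

/-- The standard translation T_{x,y} of LHS into the correspondence
language; the fresh variable used at a modal step is `max x y + 1`. -/
def stTr : ℕ → ℕ → LHSForm → FOForm
  | x, _, .pl i => .pl i x
  | _, y, .pr i => .pr i y
  | x, y, .I => .eq x y
  | x, y, .neg φ => .neg (stTr x y φ)
  | x, y, .and φ ψ => .and (stTr x y φ) (stTr x y ψ)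
  | x, y, .box φ => .all (max x y + 1) (.imp (.rel x (max x y + 1)) (stTr (max x y + 1) y φ))
  | x, y, .bbox φ => .all (max x y + 1) (.imp (.rel y (max x y + 1)) (stTr x (max x y + 1) φ))

lemma FOsat_congr (M : LHSModel) (α : FOForm) : ∀ (g g' : ℕ → M.W),
    (∀ v ∈ α.freeVars, g v = g' v) → (FOsat M g α ↔ FOsat M g' α) := by
  induction α with
  | pl i x => intro g g' h; simp [FOsat, h x (by simp [FOForm.freeVars])]
  | pr i y => intro g g' h; simp [FOsat, h y (by simp [FOForm.freeVars])]
  | rel x y => intro g g' h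
               simp [FOsat, h x (by simp [FOForm.freeVars]), h y (by simp [FOForm.freeVars])]
  | eq x y => intro g g' h
              simp [FOsat, h x (by simp [FOForm.freeVars]), h y (by simp [FOForm.freeVars])]
  | neg α ih => intro g g' h; simp [FOsat, ih g g' h]
  | and α β ih1 ih2 =>
      intro g g' h
      simp [FOsat, ih1 g g' (fun v hv => h v (Or.inl hv)),
        ih2 g g' (fun v hv => h v (Or.inr hv))]
  | imp α β ih1 ih2 =>
      intro g g' h
      simp [FOsat, ih1 g g' (fun v hv => h v (Or.inl hv)),
        ih2 g g' (fun v hv => h v (Or.inr hv))]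
  | all x α ih =>
      intro g g' h
      simp only [FOsat]
      constructor <;> intro H w
      · rw [← ih (Function.update g x w) (Function.update g' x w) ?_]
        · exact H w
        · intro v hv
          rcases eq_or_ne v x with rfl | hvx
          · simp
          · simp only [Function.update_of_ne hvx]
            exact h v ⟨hv, hvx⟩
      · rw [ih (Function.update g x w) (Function.update g' x w) ?_]
        · exact H w
        · intro v hv
          rcases eq_or_ne v x with rfl | hvx
          · simp
          · simp only [Function.update_of_ne hvx]
            exact h v ⟨hv, hvx⟩

lemma freeVars_stTr (φ : LHSForm) : ∀ x y, (stTr x y φ).freeVars ⊆ {x, y} := by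
  induction φ with
  | pl i => intro x y; simp [stTr, FOForm.freeVars]
  | pr i => intro x y; simp [stTr, FOForm.freeVars]
  | I => intro x y; simp [stTr, FOForm.freeVars]
  | neg φ ih => intro x y; simpa [stTr, FOForm.freeVars] using ih x y
  | and φ ψ ih1 ih2 =>
      intro x y
      simp only [stTr, FOForm.freeVars]
      exact Set.union_subset (ih1 x y) (ih2 x y)
  | box φ ih =>
      intro x y
      simp only [stTr, FOForm.freeVars]
      intro v hv
      rcases hv with ⟨hv1, hv2⟩
      simp only [Set.mem_union, Set.mem_singleton_iff, FOForm.freeVars,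
        Set.mem_insert_iff] at hv1 ⊢
      simp only [Set.mem_singleton_iff] at hv2
      rcases hv1 with (h | h) | h
      · exact Or.inl h
      · exact absurd h hv2
      · rcases ih (max x y + 1) y h with h' | h'
        · exact absurd h' hv2
        · exact Or.inr h'
  | bbox φ ih =>
      intro x y
      simp only [stTr, FOForm.freeVars]
      intro v hv
      rcases hv with ⟨hv1, hv2⟩
      simp only [Set.mem_union, Set.mem_singleton_iff, FOForm.freeVars,
        Set.mem_insert_iff] at hv1 ⊢
      simp only [Set.mem_singleton_iff] at hv2
      rcases hv1 with (h | h) | h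
      · exact Or.inr h
      · exact absurd h hv2
      · rcases ih x (max x y + 1) h with h' | h'
        · exact Or.inl h'
        · exact absurd h' hv2

/-- Correctness of the standard translation: for every LHS formula φ and every
pointed model ⟨M,s,t⟩, `M,s,t ⊨ φ` in the two-dimensional LHS semantics iff the
first-order translation `T_{x,y}(φ)` is satisfied in `M` under any assignment
sending `x` to `s` and `y` to `t` (for distinct variables `x ≠ y`). -/
theorem standard_translation_correct (M : LHSModel) (φ : LHSForm)
    (x y : ℕ) (hxy : x ≠ y) (g : ℕ → M.W) (s t : M.W) :
    M.sat s t φ ↔ FOsat M (Function.update (Function.update g x s) y t) (stTr x y φ) := by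
  induction φ generalizing x y g s t with
  | pl i =>
      simp [LHSModel.sat, stTr, FOsat, Function.update_of_ne hxy]
  | pr i =>
      simp [LHSModel.sat, stTr, FOsat]
  | I =>
      simp [LHSModel.sat, stTr, FOsat, Function.update_of_ne hxy]
  | neg φ ih =>
      simp [LHSModel.sat, stTr, FOsat, ih x y hxy g s t]
  | and φ ψ ih1 ih2 =>
      simp [LHSModel.sat, stTr, FOsat, ih1 x y hxy g s t, ih2 x y hxy g s t]
  | box φ ih =>
      have hzx : max x y + 1 ≠ x := Nat.ne_of_gt (Nat.lt_succ_of_le (le_max_left x y))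
      have hzy : max x y + 1 ≠ y := Nat.ne_of_gt (Nat.lt_succ_of_le (le_max_right x y))
      have key : ∀ w : M.W,
          (∀ v ∈ (stTr (max x y + 1) y φ).freeVars,
            Function.update (Function.update (Function.update g x s) y t) (max x y + 1) w v =
            Function.update (Function.update g (max x y + 1) w) y t v) := by
        intro w v hv
        rcases freeVars_stTr φ (max x y + 1) y hv with rfl | hv'
        · simp [Function.update_of_ne hzy]
        · simp only [Set.mem_singleton_iff] at hv'; subst hv'
          simp [Function.update_of_ne (fun h => hzy h.symm)]
      simp only [LHSModel.sat, stTr, FOsat, Function.update_self,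
        Function.update_of_ne hzx.symm, Function.update_of_ne hzy.symm,
        Function.update_of_ne hxy]
      constructor
      · intro H w hR
        rw [FOsat_congr M _ _ _ (key w)]
        exact (ih (max x y + 1) y hzy g w t).mp (H w hR)
      · intro H w hR
        have := H w hR
        rw [FOsat_congr M _ _ _ (key w)] at this
        exact (ih (max x y + 1) y hzy g w t).mpr this
  | bbox φ ih =>
      have hzx : max x y + 1 ≠ x := Nat.ne_of_gt (Nat.lt_succ_of_le (le_max_left x y))
      have hzy : max x y + 1 ≠ y := Nat.ne_of_gt (Nat.lt_succ_of_le (le_max_right x y))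
      have key : ∀ w : M.W,
          (∀ v ∈ (stTr x (max x y + 1) φ).freeVars,
            Function.update (Function.update (Function.update g x s) y t) (max x y + 1) w v =
            Function.update (Function.update g x s) (max x y + 1) w v) := by
        intro w v hv
        rcases freeVars_stTr φ x (max x y + 1) hv with rfl | hv'
        · simp [Function.update_of_ne hzx, Function.update_of_ne hxy,
            Function.update_of_ne (fun h => hzx h.symm)]
        · simp only [Set.mem_singleton_iff] at hv'; subst hv'; simp
      simp only [LHSModel.sat, stTr, FOsat, Function.update_self,
        Function.update_of_ne hzx.symm, Function.update_of_ne hzy.symm,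
        Function.update_of_ne hxy]
      constructor
      · intro H w hR
        rw [FOsat_congr M _ _ _ (key w)]
        exact (ih x (max x y + 1) hzx.symm g s w).mp (H w hR)
      · intro H w hR
        have := H w hR
        rw [FOsat_congr M _ _ _ (key w)] at this
        exact (ih x (max x y + 1) hzx.symm g s w).mpr this
end

section
/- Van Benthem characterization theorem for LHS: a first-order formula α(x,y) in the correspondence language is invariant under LHS-bisimulation if and only if α is logically equivalent to the standard translation T_{x,y}(φ) of some LHS formula φ. -/
/-- α(x,y) (with free variables among x = 0, y = 1) is invariant for
LHS-bisimulation. -/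
def InvariantForLHSBisim (α : FOForm) : Prop :=
  ∀ (M M' : LHSModel) (Z : M.W × M.W → M'.W × M'.W → Prop)
    (s t : M.W) (s' t' : M'.W), IsBisim M M' Z → Z (s, t) (s', t') →
    (FOsat M (fun n => if n = 0 then s else t) α ↔
      FOsat M' (fun n => if n = 0 then s' else t') α)


namespace VB
open Classical

/-! ### Basic lemmas -/

/-- Satisfaction only depends on the free variables. -/
lemma fosat_congr (M : LHSModel) :
    ∀ (α : FOForm) (g g' : ℕ → M.W), (∀ n ∈ α.freeVars, g n = g' n) →
      (FOsat M g α ↔ FOsat M g' α) := by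
  intro α
  induction α with
  | pl i x => intro g g' h; simp [FOsat, h x (by simp [FOForm.freeVars])]
  | pr i x => intro g g' h; simp [FOsat, h x (by simp [FOForm.freeVars])]
  | rel x y => intro g g' h
               simp [FOsat, h x (by simp [FOForm.freeVars]), h y (by simp [FOForm.freeVars])]
  | eq x y => intro g g' h
              simp [FOsat, h x (by simp [FOForm.freeVars]), h y (by simp [FOForm.freeVars])]
  | neg β ih => intro g g' h; simp only [FOsat]; rw [ih g g' h]
  | and β γ ihβ ihγ =>
      intro g g' h
      simp only [FOsat]
      rw [ihβ g g' (fun n hn => h n (Or.inl hn)), ihγ g g' (fun n hn => h n (Or.inr hn))]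
  | imp β γ ihβ ihγ =>
      intro g g' h
      simp only [FOsat]
      rw [ihβ g g' (fun n hn => h n (Or.inl hn)), ihγ g g' (fun n hn => h n (Or.inr hn))]
  | all x β ih =>
      intro g g' h
      simp only [FOsat]
      refine forall_congr' fun w => ih _ _ fun n hn => ?_
      by_cases hx : n = x
      · subst hx; simp [Function.update]
      · simp only [Function.update, dif_neg hx]
        exact h n ⟨hn, hx⟩

lemma stTr_freeVars : ∀ (φ : LHSForm) (x y : ℕ), (stTr x y φ).freeVars ⊆ {x, y} := by
  intro φ
  induction φ with
  | pl i => intro x y; simp [stTr, FOForm.freeVars]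
  | pr i => intro x y; simp [stTr, FOForm.freeVars]
  | I => intro x y; simp [stTr, FOForm.freeVars]
  | neg φ ih => intro x y; exact ih x y
  | and φ ψ ihφ ihψ => intro x y; exact Set.union_subset (ihφ x y) (ihψ x y)
  | box φ ih =>
      intro x y
      intro n hn
      rcases hn with ⟨hn, hn2⟩
      simp only [Set.mem_singleton_iff] at hn2
      rcases hn with hn | hn
      · rcases hn with hn | hn
        · exact Or.inl hn
        · exact absurd hn hn2
      · rcases ih _ y hn with h | h
        · exact absurd h hn2
        · exact Or.inr h
  | bbox φ ih =>
      intro x y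
      intro n hn
      rcases hn with ⟨hn, hn2⟩
      simp only [Set.mem_singleton_iff] at hn2
      rcases hn with hn | hn
      · rcases hn with hn | hn
        · exact Or.inr hn
        · exact absurd hn hn2
      · rcases ih x _ hn with h | h
        · exact Or.inl h
        · exact absurd h hn2

/-- Correctness of the standard translation. -/
lemma stTr_correct (M : LHSModel) :
    ∀ (φ : LHSForm) (x y : ℕ) (g : ℕ → M.W),
      FOsat M g (stTr x y φ) ↔ M.sat (g x) (g y) φ := by
  intro φ
  induction φ with
  | pl i => intro x y g; rfl
  | pr i => intro x y g; rfl
  | I => intro x y g; rfl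
  | neg φ ih => intro x y g; simp only [stTr, FOsat, LHSModel.sat]; rw [ih]
  | and φ ψ ihφ ihψ => intro x y g; simp only [stTr, FOsat, LHSModel.sat]; rw [ihφ, ihψ]
  | box φ ih =>
      intro x y g
      have hx : x ≠ max x y + 1 := by omega
      have hy : y ≠ max x y + 1 := by omega
      simp only [stTr, FOsat, LHSModel.sat]
      refine forall_congr' fun w => ?_
      rw [ih]
      simp [Function.update, dif_neg hx, dif_neg hy]
  | bbox φ ih =>
      intro x y g
      have hx : x ≠ max x y + 1 := by omega
      have hy : y ≠ max x y + 1 := by omega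
      simp only [stTr, FOsat, LHSModel.sat]
      refine forall_congr' fun w => ?_
      rw [ih]
      simp [Function.update, dif_neg hx, dif_neg hy]

/-- Modal satisfaction is invariant under LHS-bisimulation. -/
lemma sat_bisim (M M' : LHSModel) (Z : M.W × M.W → M'.W × M'.W → Prop)
    (hZ : IsBisim M M' Z) :
    ∀ (φ : LHSForm) (s t : M.W) (s' t' : M'.W), Z (s, t) (s', t') →
      (M.sat s t φ ↔ M'.sat s' t' φ) := by
  intro φ
  induction φ with
  | pl i => intro s t s' t' h; exact (hZ s t s' t' h).1 i
  | pr i => intro s t s' t' h; exact (hZ s t s' t' h).2.1 i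
  | I => intro s t s' t' h; exact (hZ s t s' t' h).2.2.1
  | neg φ ih => intro s t s' t' h; simp only [LHSModel.sat]; rw [ih s t s' t' h]
  | and φ ψ ihφ ihψ =>
      intro s t s' t' h
      simp only [LHSModel.sat]; rw [ihφ s t s' t' h, ihψ s t s' t' h]
  | box φ ih =>
      intro s t s' t' h
      obtain ⟨-, -, -, hf, -, hb, -⟩ := hZ s t s' t' h
      constructor
      · intro hs v' hv'
        obtain ⟨v, hv, hvZ⟩ := hb v' hv'
        exact (ih v t v' t' hvZ).1 (hs v hv)
      · intro hs v hv
        obtain ⟨v', hv', hvZ⟩ := hf v hv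
        exact (ih v t v' t' hvZ).2 (hs v' hv')
  | bbox φ ih =>
      intro s t s' t' h
      obtain ⟨-, -, -, -, hf, -, hb⟩ := hZ s t s' t' h
      constructor
      · intro hs v' hv'
        obtain ⟨v, hv, hvZ⟩ := hb v' hv'
        exact (ih s v s' v' hvZ).1 (hs v hv)
      · intro hs v hv
        obtain ⟨v', hv', hvZ⟩ := hf v hv
        exact (ih s v s' v' hvZ).2 (hs v' hv')

/-! ### Conjunctions and an enumeration of `LHSForm` -/

def taut : LHSForm := LHSForm.imp .I .I

lemma sat_taut (M : LHSModel) (s t : M.W) : M.sat s t taut := by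
  simp [taut, LHSForm.imp, LHSModel.sat]

def conjList : List LHSForm → LHSForm := List.foldr .and taut

lemma sat_conjList (M : LHSModel) (s t : M.W) :
    ∀ L : List LHSForm, M.sat s t (conjList L) ↔ ∀ ψ ∈ L, M.sat s t ψ := by
  intro L
  induction L with
  | nil => simpa [conjList] using sat_taut M s t
  | cons ψ L ih =>
      show M.sat s t ψ ∧ M.sat s t (conjList L) ↔ _
      rw [ih]
      constructor
      · rintro ⟨h1, h2⟩ χ hχ
        rcases List.mem_cons.1 hχ with hχ | hχ
        · exact hχ ▸ h1
        · exact h2 χ hχ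
      · intro h
        exact ⟨h ψ List.mem_cons_self, fun χ hχ => h χ (List.mem_cons_of_mem _ hχ)⟩

lemma sat_dia (M : LHSModel) (s t : M.W) (φ : LHSForm) :
    M.sat s t (.dia φ) ↔ ∃ v, M.R s v ∧ M.sat v t φ := by
  simp only [LHSForm.dia, LHSModel.sat]
  push_neg
  tauto

lemma sat_bdia (M : LHSModel) (s t : M.W) (φ : LHSForm) :
    M.sat s t (.bdia φ) ↔ ∃ v, M.R t v ∧ M.sat s v φ := by
  simp only [LHSForm.bdia, LHSModel.sat]
  push_neg
  tauto

def codeOf : LHSForm → ℕ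
  | .pl i => Nat.pair 0 i
  | .pr i => Nat.pair 1 i
  | .I => Nat.pair 2 0
  | .neg φ => Nat.pair 3 (codeOf φ)
  | .and φ ψ => Nat.pair 4 (Nat.pair (codeOf φ) (codeOf ψ))
  | .box φ => Nat.pair 5 (codeOf φ)
  | .bbox φ => Nat.pair 6 (codeOf φ)

lemma codeOf_inj : ∀ φ ψ : LHSForm, codeOf φ = codeOf ψ → φ = ψ := by
  intro φ
  induction φ with
  | pl i =>
      intro ψ h; cases ψ <;> simp only [codeOf, Nat.pair_eq_pair] at h
      all_goals first | exact absurd h.1 (by decide) | rw [h.2]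
  | pr i =>
      intro ψ h; cases ψ <;> simp only [codeOf, Nat.pair_eq_pair] at h
      all_goals first | exact absurd h.1 (by decide) | rw [h.2]
  | I =>
      intro ψ h; cases ψ <;> simp only [codeOf, Nat.pair_eq_pair] at h
      all_goals first | exact absurd h.1 (by decide) | rfl
  | neg φ ih =>
      intro ψ h; cases ψ <;> simp only [codeOf, Nat.pair_eq_pair] at h
      all_goals (first | exact absurd h.1 (by decide) | exact congrArg LHSForm.neg (ih _ h.2))
  | and φ χ ihφ ihχ =>
      intro ψ h; cases ψ <;> simp only [codeOf, Nat.pair_eq_pair] at h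
      all_goals (first | exact absurd h.1 (by decide) | rw [ihφ _ h.2.1, ihχ _ h.2.2])
  | box φ ih =>
      intro ψ h; cases ψ <;> simp only [codeOf, Nat.pair_eq_pair] at h
      all_goals (first | exact absurd h.1 (by decide) | exact congrArg LHSForm.box (ih _ h.2))
  | bbox φ ih =>
      intro ψ h; cases ψ <;> simp only [codeOf, Nat.pair_eq_pair] at h
      all_goals (first | exact absurd h.1 (by decide) | exact congrArg LHSForm.bbox (ih _ h.2))

instance : Countable LHSForm := ⟨⟨codeOf, fun _ _ h => codeOf_inj _ _ h⟩⟩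

instance : Nonempty LHSForm := ⟨LHSForm.I⟩

/-- A surjective enumeration of LHS formulas. -/
noncomputable def enum : ℕ → LHSForm := (exists_surjective_nat LHSForm).choose

lemma enum_surj : Function.Surjective enum := (exists_surjective_nat LHSForm).choose_spec

end VB

namespace VB

/-! ### Ultraproducts and Łoś's theorem -/

section UProd

variable {I : Type} (U : Ultrafilter I) (Ms : I → LHSModel)

lemma mem_congr {A B C : Set I} (hC : C ∈ U) (h : ∀ i ∈ C, i ∈ A ↔ i ∈ B) :
    A ∈ U ↔ B ∈ U := by
  constructor
  · intro hA
    exact Filter.mem_of_superset (Filter.inter_mem hA hC) fun i hi => (h i hi.2).1 hi.1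
  · intro hB
    exact Filter.mem_of_superset (Filter.inter_mem hB hC) fun i hi => (h i hi.2).2 hi.1

def uSetoid : Setoid (∀ i, (Ms i).W) where
  r f g := {i | f i = g i} ∈ U
  iseqv := by
    refine ⟨fun f => ?_, fun {f g} h => ?_, fun {f g h} h1 h2 => ?_⟩
    · exact Filter.mem_of_superset Filter.univ_mem fun i _ => rfl
    · exact Filter.mem_of_superset h fun i hi => (hi : f i = g i).symm
    · exact Filter.mem_of_superset (Filter.inter_mem h1 h2)
        fun i hi => (hi.1 : f i = g i).trans hi.2

def UProd : LHSModel where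
  W := Quotient (uSetoid U Ms)
  R := Quotient.lift₂ (fun f g => {i | (Ms i).R (f i) (g i)} ∈ U)
    (by
      intro f g f' g' hf hg
      refine propext (mem_congr U (Filter.inter_mem hf hg) fun i hi => ?_)
      have e1 : f i = f' i := hi.1
      have e2 : g i = g' i := hi.2
      simp only [Set.mem_setOf_eq, e1, e2])
  Vl := fun n => Quotient.lift (fun f => {i | (Ms i).Vl n (f i)} ∈ U)
    (by
      intro f f' hf
      refine propext (mem_congr U hf fun i hi => ?_)
      have e1 : f i = f' i := hi
      simp only [Set.mem_setOf_eq, e1])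
  Vr := fun n => Quotient.lift (fun f => {i | (Ms i).Vr n (f i)} ∈ U)
    (by
      intro f f' hf
      refine propext (mem_congr U hf fun i hi => ?_)
      have e1 : f i = f' i := hi
      simp only [Set.mem_setOf_eq, e1])

lemma update_mk (G : ℕ → ∀ i, (Ms i).W) (x : ℕ) (h : ∀ i, (Ms i).W) :
    Function.update (fun n => (Quotient.mk (uSetoid U Ms) (G n))) x
        (Quotient.mk (uSetoid U Ms) h) =
      fun n => Quotient.mk (uSetoid U Ms) (Function.update G x h n) := by
  funext n
  by_cases hn : n = x
  · subst hn; simp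
  · simp [Function.update, hn]

lemma update_index (G : ℕ → ∀ i, (Ms i).W) (x : ℕ) (h : ∀ i, (Ms i).W) (i : I) :
    (fun n => Function.update G x h n i) = Function.update (fun n => G n i) x (h i) := by
  funext n
  by_cases hn : n = x
  · subst hn; simp
  · simp [Function.update, hn]

/-- Łoś's theorem for the correspondence language. -/
lemma los (α : FOForm) : ∀ G : ℕ → ∀ i, (Ms i).W,
    FOsat (UProd U Ms) (fun n => Quotient.mk (uSetoid U Ms) (G n)) α ↔
      {i | FOsat (Ms i) (fun n => G n i) α} ∈ U := by
  induction α with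
  | pl m x => intro G; exact Iff.rfl
  | pr m x => intro G; exact Iff.rfl
  | rel x y => intro G; exact Iff.rfl
  | eq x y =>
      intro G
      simp only [FOsat]
      exact ⟨fun h => Quotient.exact h, fun h => Quotient.sound h⟩
  | neg β ih =>
      intro G
      simp only [FOsat]
      rw [ih G, ← Ultrafilter.compl_mem_iff_notMem]
      rfl
  | and β γ ihβ ihγ =>
      intro G
      simp only [FOsat]
      rw [ihβ G, ihγ G]
      constructor
      · rintro ⟨h1, h2⟩
        exact Filter.mem_of_superset (Filter.inter_mem h1 h2) fun i hi => ⟨hi.1, hi.2⟩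
      · intro h
        exact ⟨Filter.mem_of_superset h fun i hi => hi.1,
               Filter.mem_of_superset h fun i hi => hi.2⟩
  | imp β γ ihβ ihγ =>
      intro G
      simp only [FOsat]
      rw [ihβ G, ihγ G]
      constructor
      · intro h
        by_cases hβ : {i | FOsat (Ms i) (fun n => G n i) β} ∈ U
        · exact Filter.mem_of_superset (h hβ) fun i hi => fun _ => hi
        · rw [← Ultrafilter.compl_mem_iff_notMem] at hβ
          exact Filter.mem_of_superset hβ fun i hi => fun hc => absurd hc hi
      · intro h hβ
        exact Filter.mem_of_superset (Filter.inter_mem h hβ) fun i hi => hi.1 hi.2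
  | all x β ih =>
      intro G
      simp only [FOsat]
      constructor
      · intro h
        by_contra hc
        rw [← Ultrafilter.compl_mem_iff_notMem] at hc
        classical
        set h0 : ∀ i, (Ms i).W := fun i =>
          if hh : ∃ w, ¬ FOsat (Ms i) (Function.update (fun n => G n i) x w) β
          then Classical.choose hh else G 0 i with h0def
        have hw := h (Quotient.mk (uSetoid U Ms) h0)
        erw [update_mk U Ms G x h0, ih _] at hw
        obtain ⟨i, hi1, hi2⟩ := Filter.nonempty_of_mem (Filter.inter_mem hw hc)
        have hi1' : FOsat (Ms i) (Function.update (fun n => G n i) x (h0 i)) β := by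
          rw [← update_index Ms G x h0 i]; exact hi1
        have hex : ∃ w, ¬ FOsat (Ms i) (Function.update (fun n => G n i) x w) β := by
          have := hi2
          simp only [Set.mem_compl_iff, Set.mem_setOf_eq] at this
          push_neg at this
          exact this
        have : h0 i = Classical.choose hex := by rw [h0def]; simp only [dif_pos hex]
        exact absurd hi1' (this ▸ Classical.choose_spec hex)
      · intro h w
        obtain ⟨h1, rfl⟩ := Quotient.exists_rep w
        erw [update_mk U Ms G x h1, ih _]
        refine Filter.mem_of_superset h fun i hi => ?_
        have : FOsat (Ms i) (Function.update (fun n => G n i) x (h1 i)) β := hi (h1 i)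
        rw [← update_index Ms G x h1 i] at this
        exact this

end UProd

section UPow

variable {I : Type} (U : Ultrafilter I) (N : LHSModel)

/-- The ultrapower of a single model. -/
def UPow : LHSModel := UProd U (fun _ : I => N)

/-- Łoś's theorem for modal formulas in an ultrapower. -/
lemma los_modal (f g : I → N.W) (φ : LHSForm) :
    (UPow U N).sat (Quotient.mk (uSetoid U fun _ => N) f)
        (Quotient.mk (uSetoid U fun _ => N) g) φ ↔
      {i | N.sat (f i) (g i) φ} ∈ U := by
  classical
  have h2 := stTr_correct (UPow U N) φ 0 1
    (fun n => Quotient.mk (uSetoid U fun _ => N)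
      ((fun m => if m = 0 then f else g) n))
  have ea0 : (fun m => if m = 0 then f else g) 0 = f := by simp
  have ea1 : (fun m => if m = 0 then f else g) 1 = g := by simp
  rw [ea0, ea1] at h2
  rw [← h2]
  have h4 : FOsat (UProd U (fun _ => N))
      (fun n => Quotient.mk (uSetoid U fun _ => N)
        ((fun m => if m = 0 then f else g) n)) (stTr 0 1 φ) ↔
      {i | FOsat N (fun n => (fun m => if m = 0 then f else g) n i) (stTr 0 1 φ)} ∈ U :=
    los U (fun _ => N) (stTr 0 1 φ) (fun m => if m = 0 then f else g)
  refine Iff.trans h4 ?_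
  refine mem_congr U Filter.univ_mem fun i _ => ?_
  simp only [Set.mem_setOf_eq]
  rw [stTr_correct N φ 0 1]
  simp

/-- Modal satisfaction at the diagonal embedding. -/
lemma los_modal_diag (s t : N.W) (φ : LHSForm) :
    (UPow U N).sat (Quotient.mk (uSetoid U fun _ => N) (fun _ => s))
        (Quotient.mk (uSetoid U fun _ => N) (fun _ => t)) φ ↔ N.sat s t φ := by
  rw [los_modal]
  constructor
  · intro hm
    by_contra hn
    obtain ⟨i, hi⟩ := Filter.nonempty_of_mem hm
    exact hn hi
  · intro hm
    exact Filter.mem_of_superset Filter.univ_mem fun i _ => hm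

/-- First-order satisfaction at the diagonal embedding. -/
lemma los_fo_diag (g0 : ℕ → N.W) (α : FOForm) :
    FOsat (UPow U N) (fun n => Quotient.mk (uSetoid U fun _ => N) (fun _ => g0 n)) α ↔
      FOsat N g0 α := by
  refine Iff.trans (los U (fun _ => N) α (fun n => fun _ => g0 n)) ?_
  constructor
  · intro hm
    obtain ⟨i, hi⟩ := Filter.nonempty_of_mem hm
    exact hi
  · intro hm
    exact Filter.mem_of_superset Filter.univ_mem fun i _ => hm

end UPow

end VB

namespace VB

/-! ### Saturation of ultrapowers over a nonprincipal ultrafilter on ℕ -/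

open Filter in
noncomputable abbrev hU : Ultrafilter ℕ := Filter.hyperfilter ℕ

lemma tail_mem (n : ℕ) : {i : ℕ | n ≤ i} ∈ hU := by
  apply Filter.mem_hyperfilter_of_finite_compl
  have hsub : {i : ℕ | n ≤ i}ᶜ ⊆ Set.Iio n := by
    intro i hi
    simp only [Set.mem_compl_iff, Set.mem_setOf_eq, not_le] at hi
    exact hi
  exact (Set.finite_Iio n).subset hsub

open Classical in
/-- The list of the first `n+1` enumerated formulas that belong to `T`. -/
noncomputable def TList (T : Set LHSForm) (n : ℕ) : List LHSForm :=
  ((List.range (n + 1)).filter fun k => decide (enum k ∈ T)).map enum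

lemma mem_TList {T : Set LHSForm} {n : ℕ} {ψ : LHSForm} :
    ψ ∈ TList T n ↔ (∃ k ≤ n, enum k = ψ) ∧ ψ ∈ T := by
  classical
  simp only [TList, List.mem_map, List.mem_filter, List.mem_range]
  constructor
  · rintro ⟨k, ⟨hk1, hk2⟩, rfl⟩
    exact ⟨⟨k, by omega, rfl⟩, by simpa using hk2⟩
  · rintro ⟨⟨k, hk, rfl⟩, hT⟩
    exact ⟨k, ⟨by omega, by simpa using hT⟩, rfl⟩

lemma TList_mem_T {T : Set LHSForm} {n : ℕ} {ψ : LHSForm} (h : ψ ∈ TList T n) : ψ ∈ T :=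
  (mem_TList.1 h).2

lemma TList_mono {T : Set LHSForm} {m n : ℕ} (hmn : m ≤ n) {ψ : LHSForm}
    (h : ψ ∈ TList T m) : ψ ∈ TList T n := by
  obtain ⟨⟨k, hk, rfl⟩, hT⟩ := mem_TList.1 h
  exact mem_TList.2 ⟨⟨k, le_trans hk hmn, rfl⟩, hT⟩

lemma enum_mem_TList {T : Set LHSForm} {n k : ℕ} (hk : k ≤ n) (hT : enum k ∈ T) :
    enum k ∈ TList T n :=
  mem_TList.2 ⟨⟨k, hk, rfl⟩, hT⟩

/-- Realizing a finitely-satisfiable set of formulas at a successor of the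
left coordinate in the ultrapower. -/
lemma realize_left (N : LHSModel) (f' g' : ℕ → N.W) (T : Set LHSForm)
    (h : ∀ n : ℕ, (UPow hU N).sat (Quotient.mk (uSetoid hU fun _ => N) f')
        (Quotient.mk (uSetoid hU fun _ => N) g') (.dia (conjList (TList T n)))) :
    ∃ v' : ℕ → N.W,
      (UPow hU N).R (Quotient.mk (uSetoid hU fun _ => N) f')
          (Quotient.mk (uSetoid hU fun _ => N) v') ∧
      ∀ ψ ∈ T, (UPow hU N).sat (Quotient.mk (uSetoid hU fun _ => N) v')
          (Quotient.mk (uSetoid hU fun _ => N) g') ψ := by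
  classical
  set S : ℕ → Set ℕ := fun n => {i | N.sat (f' i) (g' i) (.dia (conjList (TList T n)))}
    with hSdef
  have hS : ∀ n, S n ∈ hU := fun n => (los_modal hU N f' g' _).1 (h n)
  have hSanti : ∀ {m n : ℕ}, m ≤ n → S n ⊆ S m := by
    intro m n hmn i hi
    obtain ⟨w, hw, hsat⟩ := (sat_dia N _ _ _).1 hi
    refine (sat_dia N _ _ _).2 ⟨w, hw, (sat_conjList N _ _ _).2 fun ψ hψ =>
      (sat_conjList N _ _ _).1 hsat ψ (TList_mono hmn hψ)⟩
  set m : ℕ → ℕ := fun i => Nat.findGreatest (fun n => i ∈ S n) i with hmdef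
  set v' : ℕ → N.W := fun i =>
    if hh : ∃ w, N.R (f' i) w ∧ N.sat w (g' i) (conjList (TList T (m i)))
    then Classical.choose hh else f' i with hv'def
  have key : ∀ i ∈ S 0, N.R (f' i) (v' i) ∧
      N.sat (v' i) (g' i) (conjList (TList T (m i))) := by
    intro i hi
    have hPm : i ∈ S (m i) := Nat.findGreatest_spec (P := fun n => i ∈ S n) (Nat.zero_le i) hi
    obtain ⟨w, hw, hsat⟩ := (sat_dia N _ _ _).1 hPm
    have hh : ∃ w, N.R (f' i) w ∧ N.sat w (g' i) (conjList (TList T (m i))) := ⟨w, hw, hsat⟩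
    have : v' i = Classical.choose hh := by rw [hv'def]; simp only [dif_pos hh]
    rw [this]
    exact Classical.choose_spec hh
  refine ⟨v', ?_, ?_⟩
  · show {i | N.R (f' i) (v' i)} ∈ hU
    exact Filter.mem_of_superset (hS 0) fun i hi => (key i hi).1
  · intro ψ hψ
    obtain ⟨k, rfl⟩ := enum_surj ψ
    rw [los_modal]
    have hB : S k ∩ {i | k ≤ i} ∈ hU := Filter.inter_mem (hS k) (tail_mem k)
    refine Filter.mem_of_superset hB fun i hi => ?_
    have hik : k ≤ m i := Nat.le_findGreatest hi.2 hi.1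
    have hi0 : i ∈ S 0 := hSanti (Nat.zero_le k) hi.1
    have hsat := (key i hi0).2
    exact (sat_conjList N _ _ _).1 hsat _ (enum_mem_TList hik hψ)

/-- Realizing a finitely-satisfiable set of formulas at a successor of the
right coordinate in the ultrapower. -/
lemma realize_right (N : LHSModel) (f' g' : ℕ → N.W) (T : Set LHSForm)
    (h : ∀ n : ℕ, (UPow hU N).sat (Quotient.mk (uSetoid hU fun _ => N) f')
        (Quotient.mk (uSetoid hU fun _ => N) g') (.bdia (conjList (TList T n)))) :
    ∃ v' : ℕ → N.W,
      (UPow hU N).R (Quotient.mk (uSetoid hU fun _ => N) g')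
          (Quotient.mk (uSetoid hU fun _ => N) v') ∧
      ∀ ψ ∈ T, (UPow hU N).sat (Quotient.mk (uSetoid hU fun _ => N) f')
          (Quotient.mk (uSetoid hU fun _ => N) v') ψ := by
  classical
  set S : ℕ → Set ℕ := fun n => {i | N.sat (f' i) (g' i) (.bdia (conjList (TList T n)))}
    with hSdef
  have hS : ∀ n, S n ∈ hU := fun n => (los_modal hU N f' g' _).1 (h n)
  have hSanti : ∀ {m n : ℕ}, m ≤ n → S n ⊆ S m := by
    intro m n hmn i hi
    obtain ⟨w, hw, hsat⟩ := (sat_bdia N _ _ _).1 hi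
    refine (sat_bdia N _ _ _).2 ⟨w, hw, (sat_conjList N _ _ _).2 fun ψ hψ =>
      (sat_conjList N _ _ _).1 hsat ψ (TList_mono hmn hψ)⟩
  set m : ℕ → ℕ := fun i => Nat.findGreatest (fun n => i ∈ S n) i with hmdef
  set v' : ℕ → N.W := fun i =>
    if hh : ∃ w, N.R (g' i) w ∧ N.sat (f' i) w (conjList (TList T (m i)))
    then Classical.choose hh else g' i with hv'def
  have key : ∀ i ∈ S 0, N.R (g' i) (v' i) ∧
      N.sat (f' i) (v' i) (conjList (TList T (m i))) := by
    intro i hi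
    have hPm : i ∈ S (m i) := Nat.findGreatest_spec (P := fun n => i ∈ S n) (Nat.zero_le i) hi
    obtain ⟨w, hw, hsat⟩ := (sat_bdia N _ _ _).1 hPm
    have hh : ∃ w, N.R (g' i) w ∧ N.sat (f' i) w (conjList (TList T (m i))) := ⟨w, hw, hsat⟩
    have : v' i = Classical.choose hh := by rw [hv'def]; simp only [dif_pos hh]
    rw [this]
    exact Classical.choose_spec hh
  refine ⟨v', ?_, ?_⟩
  · show {i | N.R (g' i) (v' i)} ∈ hU
    exact Filter.mem_of_superset (hS 0) fun i hi => (key i hi).1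
  · intro ψ hψ
    obtain ⟨k, rfl⟩ := enum_surj ψ
    rw [los_modal]
    have hB : S k ∩ {i | k ≤ i} ∈ hU := Filter.inter_mem (hS k) (tail_mem k)
    refine Filter.mem_of_superset hB fun i hi => ?_
    have hik : k ≤ m i := Nat.le_findGreatest hi.2 hi.1
    have hi0 : i ∈ S 0 := hSanti (Nat.zero_le k) hi.1
    have hsat := (key i hi0).2
    exact (sat_conjList N _ _ _).1 hsat _ (enum_mem_TList hik hψ)

/-- Modal equivalence is a bisimulation between ultrapowers. -/
theorem bisim_upow (M N : LHSModel) :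
    IsBisim (UPow hU M) (UPow hU N)
      (fun p q => ∀ φ, (UPow hU M).sat p.1 p.2 φ ↔ (UPow hU N).sat q.1 q.2 φ) := by
  intro a b a' b' hZ
  refine ⟨fun i => hZ (.pl i), fun i => hZ (.pr i), hZ .I, ?_, ?_, ?_, ?_⟩
  · -- forth, left coordinate
    intro v hv
    obtain ⟨f', hf'⟩ := Quotient.exists_rep a'
    obtain ⟨g', hg'⟩ := Quotient.exists_rep b'
    set T : Set LHSForm := {φ | (UPow hU M).sat v b φ} with hTdef
    have h : ∀ n : ℕ, (UPow hU N).sat (Quotient.mk (uSetoid hU fun _ => N) f')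
        (Quotient.mk (uSetoid hU fun _ => N) g') (.dia (conjList (TList T n))) := by
      intro n
      rw [hf', hg']
      refine (hZ _).1 ?_
      exact (sat_dia _ _ _ _).2 ⟨v, hv, (sat_conjList _ _ _ _).2
        fun ψ hψ => TList_mem_T hψ⟩
    obtain ⟨v', hR, hsat⟩ := realize_left N f' g' T h
    refine ⟨Quotient.mk (uSetoid hU fun _ => N) v', by rw [← hf']; exact hR, ?_⟩
    intro φ
    constructor
    · intro hφ
      have := hsat φ hφ
      rwa [hg'] at this
    · intro hφ
      by_contra hc
      have : LHSForm.neg φ ∈ T := hc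
      have := hsat _ this
      rw [hg'] at this
      exact this hφ
  · -- forth, right coordinate
    intro v hv
    obtain ⟨f', hf'⟩ := Quotient.exists_rep a'
    obtain ⟨g', hg'⟩ := Quotient.exists_rep b'
    set T : Set LHSForm := {φ | (UPow hU M).sat a v φ} with hTdef
    have h : ∀ n : ℕ, (UPow hU N).sat (Quotient.mk (uSetoid hU fun _ => N) f')
        (Quotient.mk (uSetoid hU fun _ => N) g') (.bdia (conjList (TList T n))) := by
      intro n
      rw [hf', hg']
      refine (hZ _).1 ?_
      exact (sat_bdia _ _ _ _).2 ⟨v, hv, (sat_conjList _ _ _ _).2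
        fun ψ hψ => TList_mem_T hψ⟩
    obtain ⟨v', hR, hsat⟩ := realize_right N f' g' T h
    refine ⟨Quotient.mk (uSetoid hU fun _ => N) v', by rw [← hg']; exact hR, ?_⟩
    intro φ
    constructor
    · intro hφ
      have := hsat φ hφ
      rwa [hf'] at this
    · intro hφ
      by_contra hc
      have : LHSForm.neg φ ∈ T := hc
      have := hsat _ this
      rw [hf'] at this
      exact this hφ
  · -- back, left coordinate
    intro v' hv'
    obtain ⟨f, hf⟩ := Quotient.exists_rep a
    obtain ⟨g, hg⟩ := Quotient.exists_rep b
    set T : Set LHSForm := {φ | (UPow hU N).sat v' b' φ} with hTdef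
    have h : ∀ n : ℕ, (UPow hU M).sat (Quotient.mk (uSetoid hU fun _ => M) f)
        (Quotient.mk (uSetoid hU fun _ => M) g) (.dia (conjList (TList T n))) := by
      intro n
      rw [hf, hg]
      refine (hZ _).2 ?_
      exact (sat_dia _ _ _ _).2 ⟨v', hv', (sat_conjList _ _ _ _).2
        fun ψ hψ => TList_mem_T hψ⟩
    obtain ⟨v, hR, hsat⟩ := realize_left M f g T h
    refine ⟨Quotient.mk (uSetoid hU fun _ => M) v, by rw [← hf]; exact hR, ?_⟩
    intro φ
    constructor
    · intro hφ
      by_contra hc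
      have : LHSForm.neg φ ∈ T := hc
      have := hsat _ this
      rw [hg] at this
      exact this hφ
    · intro hφ
      have := hsat φ hφ
      rwa [hg] at this
  · -- back, right coordinate
    intro v' hv'
    obtain ⟨f, hf⟩ := Quotient.exists_rep a
    obtain ⟨g, hg⟩ := Quotient.exists_rep b
    set T : Set LHSForm := {φ | (UPow hU N).sat a' v' φ} with hTdef
    have h : ∀ n : ℕ, (UPow hU M).sat (Quotient.mk (uSetoid hU fun _ => M) f)
        (Quotient.mk (uSetoid hU fun _ => M) g) (.bdia (conjList (TList T n))) := by
      intro n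
      rw [hf, hg]
      refine (hZ _).2 ?_
      exact (sat_bdia _ _ _ _).2 ⟨v', hv', (sat_conjList _ _ _ _).2
        fun ψ hψ => TList_mem_T hψ⟩
    obtain ⟨v, hR, hsat⟩ := realize_right M f g T h
    refine ⟨Quotient.mk (uSetoid hU fun _ => M) v, by rw [← hg]; exact hR, ?_⟩
    intro φ
    constructor
    · intro hφ
      by_contra hc
      have : LHSForm.neg φ ∈ T := hc
      have := hsat _ this
      rw [hf] at this
      exact this hφ
    · intro hφ
      have := hsat φ hφ
      rwa [hf] at this

end VB

namespace VB

/-! ### The transfer lemma and compactness -/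

/-- If α is invariant for LHS-bisimulation, its truth only depends on the
modal theory of the pair of states. -/
lemma transfer (α : FOForm) (hα : InvariantForLHSBisim α)
    (M N : LHSModel) (s t : M.W) (s' t' : N.W)
    (heq : ∀ φ : LHSForm, M.sat s t φ ↔ N.sat s' t' φ) :
    FOsat M (fun n => if n = 0 then s else t) α →
      FOsat N (fun n => if n = 0 then s' else t') α := by
  intro hsat
  have hbis := bisim_upow M N
  have hZ : ∀ φ : LHSForm,
      (UPow hU M).sat (Quotient.mk (uSetoid hU fun _ => M) (fun _ => s))
        (Quotient.mk (uSetoid hU fun _ => M) (fun _ => t)) φ ↔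
      (UPow hU N).sat (Quotient.mk (uSetoid hU fun _ => N) (fun _ => s'))
        (Quotient.mk (uSetoid hU fun _ => N) (fun _ => t')) φ := by
    intro φ
    rw [los_modal_diag, los_modal_diag]
    exact heq φ
  have h := hα (UPow hU M) (UPow hU N)
    (fun p q => ∀ φ, (UPow hU M).sat p.1 p.2 φ ↔ (UPow hU N).sat q.1 q.2 φ)
    (Quotient.mk (uSetoid hU fun _ => M) (fun _ => s))
    (Quotient.mk (uSetoid hU fun _ => M) (fun _ => t))
    (Quotient.mk (uSetoid hU fun _ => N) (fun _ => s'))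
    (Quotient.mk (uSetoid hU fun _ => N) (fun _ => t')) hbis hZ
  have eM : (fun n => if n = 0 then Quotient.mk (uSetoid hU fun _ => M) (fun _ => s)
      else Quotient.mk (uSetoid hU fun _ => M) (fun _ => t)) =
      (fun n => Quotient.mk (uSetoid hU fun _ => M)
        (fun _ => if n = 0 then s else t)) := by
    funext n; by_cases hn : n = 0 <;> simp [hn]
  have eN : (fun n => if n = 0 then Quotient.mk (uSetoid hU fun _ => N) (fun _ => s')
      else Quotient.mk (uSetoid hU fun _ => N) (fun _ => t')) =
      (fun n => Quotient.mk (uSetoid hU fun _ => N)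
        (fun _ => if n = 0 then s' else t')) := by
    funext n; by_cases hn : n = 0 <;> simp [hn]
  erw [eM, eN, los_fo_diag hU M _ α, los_fo_diag hU N _ α] at h
  exact h.1 hsat

/-- Countable compactness for the correspondence language over LHS models. -/
lemma compactness (T : ℕ → FOForm)
    (hfin : ∀ n : ℕ, ∃ (M : LHSModel) (g : ℕ → M.W), ∀ k ≤ n, FOsat M g (T k)) :
    ∃ (M : LHSModel) (g : ℕ → M.W), ∀ n, FOsat M g (T n) := by
  classical
  choose Ms gs hMs using hfin
  refine ⟨UProd hU Ms, fun k => Quotient.mk (uSetoid hU Ms) (fun i => gs i k), ?_⟩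
  intro n
  rw [los hU Ms (T n) (fun k i => gs i k)]
  exact Filter.mem_of_superset (tail_mem n) fun i hi => hMs i n hi

/-- Main lemma: the modal consequences of α entail α (given invariance). -/
lemma claimA (α : FOForm) (hfv : α.freeVars ⊆ {0, 1}) (hα : InvariantForLHSBisim α)
    (N : LHSModel) (g : ℕ → N.W)
    (hMC : ∀ φ : LHSForm,
      (∀ (M : LHSModel) (g' : ℕ → M.W), FOsat M g' α → FOsat M g' (stTr 0 1 φ)) →
      FOsat N g (stTr 0 1 φ)) :
    FOsat N g α := by
  classical
  set ψ : ℕ → LHSForm := fun n => if N.sat (g 0) (g 1) (enum n) then enum n else taut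
    with hψdef
  have hψsat : ∀ n, N.sat (g 0) (g 1) (ψ n) := by
    intro n
    rw [hψdef]
    by_cases hn : N.sat (g 0) (g 1) (enum n)
    · simp [hn]
    · simpa [hn] using sat_taut N (g 0) (g 1)
  set T : ℕ → FOForm := fun n => match n with
    | 0 => α
    | k + 1 => stTr 0 1 (ψ k) with hTdef
  have hfin : ∀ n : ℕ, ∃ (M : LHSModel) (gM : ℕ → M.W), ∀ k ≤ n, FOsat M gM (T k) := by
    intro n
    by_contra hno
    push_neg at hno
    -- the negated conjunction is a modal consequence of α
    set χ : LHSForm := conjList ((List.range n).map ψ) with hχdef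
    have hMCχ : ∀ (M : LHSModel) (g' : ℕ → M.W),
        FOsat M g' α → FOsat M g' (stTr 0 1 (.neg χ)) := by
      intro M g' hg'
      show ¬ FOsat M g' (stTr 0 1 χ)
      intro hχsat
      have hsatχ : M.sat (g' 0) (g' 1) χ := (stTr_correct M χ 0 1 g').1 hχsat
      obtain ⟨k, hk, hns⟩ := hno M g'
      match k, hns with
      | 0, hns => exact hns hg'
      | j + 1, hns =>
        refine hns ((stTr_correct M (ψ j) 0 1 g').2 ?_)
        refine (sat_conjList M _ _ _).1 hsatχ (ψ j) ?_
        simp only [hχdef, List.mem_map]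
        exact ⟨j, by simpa using (by omega : j < n), rfl⟩
    have := hMC (.neg χ) hMCχ
    have h2 : ¬ N.sat (g 0) (g 1) χ := by
      intro hc
      exact ((stTr_correct N (.neg χ) 0 1 g).1 this) hc
    refine h2 ((sat_conjList N _ _ _).2 ?_)
    intro ξ hξ
    simp only [List.mem_map, List.mem_range] at hξ
    obtain ⟨j, hj, rfl⟩ := hξ
    exact hψsat j
  obtain ⟨M, gM, hall⟩ := compactness T hfin
  have hα0 : FOsat M gM α := hall 0
  have heq : ∀ φ : LHSForm, M.sat (gM 0) (gM 1) φ ↔ N.sat (g 0) (g 1) φ := by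
    intro φ
    constructor
    · intro hMφ
      by_contra hNφ
      obtain ⟨m, hm⟩ := enum_surj (.neg φ)
      have hψm : ψ m = .neg φ := by
        rw [hψdef]
        simp only [hm]
        exact if_pos hNφ
      have := (stTr_correct M (ψ m) 0 1 gM).1 (hall (m + 1))
      rw [hψm] at this
      exact this hMφ
    · intro hNφ
      obtain ⟨m, hm⟩ := enum_surj φ
      have hψm : ψ m = φ := by
        rw [hψdef]
        simp only [hm]
        exact if_pos hNφ
      have := (stTr_correct M (ψ m) 0 1 gM).1 (hall (m + 1))
      rwa [hψm] at this
  -- transfer α along modal equivalence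
  have hmem01 : ∀ n ∈ α.freeVars, n = 0 ∨ n = 1 := by
    intro n hn
    have := hfv hn
    simpa using this
  have h1 : FOsat M (fun n => if n = 0 then gM 0 else gM 1) α := by
    refine (fosat_congr M α gM _ ?_).1 hα0
    intro n hn
    rcases hmem01 n hn with rfl | rfl <;> simp
  have h2 := transfer α hα M N (gM 0) (gM 1) (g 0) (g 1) heq h1
  refine (fosat_congr N α _ g ?_).1 h2
  intro n hn
  rcases hmem01 n hn with rfl | rfl <;> simp

end VB

/-- van Benthem characterization theorem for LHS: a first-order formula α(x,y)
of the correspondence language (with free variables among x = 0 and y = 1) is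
invariant under LHS-bisimulation iff it is logically equivalent to the standard
translation of some LHS formula. -/
theorem vanBenthem_characterization (α : FOForm)
    (hfv : α.freeVars ⊆ {0, 1}) :
    InvariantForLHSBisim α ↔
      ∃ φ : LHSForm, ∀ (M : LHSModel) (g : ℕ → M.W),
        FOsat M g α ↔ FOsat M g (stTr 0 1 φ) := by
  constructor
  · intro hα
    classical
    set MC : LHSForm → Prop := fun φ =>
      ∀ (M : LHSModel) (g : ℕ → M.W), FOsat M g α → FOsat M g (stTr 0 1 φ) with hMCdef
    have htautMC : MC VB.taut := by
      intro M g _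
      exact (VB.stTr_correct M VB.taut 0 1 g).2 (VB.sat_taut M _ _)
    set ψ' : ℕ → LHSForm := fun n => if MC (VB.enum n) then VB.enum n else VB.taut
      with hψ'def
    have hψ'MC : ∀ n, MC (ψ' n) := by
      intro n
      by_cases h : MC (VB.enum n)
      · have he : ψ' n = VB.enum n := by rw [hψ'def]; exact if_pos h
        rw [he]; exact h
      · have he : ψ' n = VB.taut := by rw [hψ'def]; exact if_neg h
        rw [he]; exact htautMC
    set T' : ℕ → FOForm := fun n => match n with
      | 0 => .neg α
      | k + 1 => stTr 0 1 (ψ' k) with hT'def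
    have hunsat : ¬ ∃ (M : LHSModel) (g : ℕ → M.W), ∀ n, FOsat M g (T' n) := by
      rintro ⟨M, g, hall⟩
      have hMCall : ∀ φ : LHSForm, MC φ → FOsat M g (stTr 0 1 φ) := by
        intro φ hφ
        obtain ⟨n, rfl⟩ := VB.enum_surj φ
        have he : ψ' n = VB.enum n := by rw [hψ'def]; exact if_pos hφ
        have h2 := hall (n + 1)
        rw [show T' (n + 1) = stTr 0 1 (ψ' n) from rfl, he] at h2
        exact h2
      have hαsat := VB.claimA α hfv hα M g (fun φ h => hMCall φ h)
      exact (hall 0) hαsat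
    have hfin' : ¬ ∀ n : ℕ, ∃ (M : LHSModel) (g : ℕ → M.W), ∀ k ≤ n, FOsat M g (T' k) :=
      fun h => hunsat (VB.compactness T' h)
    push_neg at hfin'
    obtain ⟨n, hn⟩ := hfin'
    refine ⟨VB.conjList ((List.range n).map ψ'), ?_⟩
    intro M g
    constructor
    · intro hαsat
      refine (VB.stTr_correct M _ 0 1 g).2 ((VB.sat_conjList M _ _ _).2 ?_)
      intro ξ hξ
      simp only [List.mem_map, List.mem_range] at hξ
      obtain ⟨j, hj, rfl⟩ := hξ
      exact (VB.stTr_correct M (ψ' j) 0 1 g).1 (hψ'MC j M g hαsat)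
    · intro hχ
      by_contra hc
      obtain ⟨k, hk, hns⟩ := hn M g
      match k, hns with
      | 0, hns => exact hns hc
      | j + 1, hns =>
        refine hns ((VB.stTr_correct M (ψ' j) 0 1 g).2 ?_)
        refine (VB.sat_conjList M _ _ _).1 ((VB.stTr_correct M _ 0 1 g).1 hχ) _ ?_
        simp only [List.mem_map, List.mem_range]
        exact ⟨j, by omega, rfl⟩
  · rintro ⟨φ, hφ⟩
    intro M M' Z s t s' t' hbis hz
    rw [hφ M _, hφ M' _, VB.stTr_correct M φ 0 1, VB.stTr_correct M' φ 0 1]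
    have hb := VB.sat_bisim M M' Z hbis φ s t s' t' hz
    simpa using hb
end

section
/- Validity of the splitting axioms: for all φ∈L_□ and ψ∈L_■, the formulas □(φ∨ψ) ↔ (□φ∨ψ) and ■(φ∨ψ) ↔ (φ∨■ψ) are valid in all LHS models, i.e., for every model M and all states s,t: M,s,t ⊨ □(φ∨ψ) iff M,s,t ⊨ □φ∨ψ, and M,s,t ⊨ ■(φ∨ψ) iff M,s,t ⊨ φ∨■ψ. -/
/-- The left fragment L_□: only left variables, ¬, ∧, □. -/
inductive IsLeft : LHSForm → Prop
  | pl (i : ℕ) : IsLeft (.pl i)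
  | neg {φ} : IsLeft φ → IsLeft φ.neg
  | and {φ ψ} : IsLeft φ → IsLeft ψ → IsLeft (φ.and ψ)
  | box {φ} : IsLeft φ → IsLeft φ.box

/-- The right fragment L_■: only right variables, ¬, ∧, ■. -/
inductive IsRight : LHSForm → Prop
  | pr (i : ℕ) : IsRight (.pr i)
  | neg {φ} : IsRight φ → IsRight φ.neg
  | and {φ ψ} : IsRight φ → IsRight ψ → IsRight (φ.and ψ)
  | bbox {φ} : IsRight φ → IsRight φ.bbox

/-- Formulas of L⁻: no occurrence of the constant I. -/
inductive NoI : LHSForm → Prop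
  | pl (i : ℕ) : NoI (.pl i)
  | pr (i : ℕ) : NoI (.pr i)
  | neg {φ} : NoI φ → NoI φ.neg
  | and {φ ψ} : NoI φ → NoI ψ → NoI (φ.and ψ)
  | box {φ} : NoI φ → NoI φ.box
  | bbox {φ} : NoI φ → NoI φ.bbox

/-- One-dimensional Kripke satisfaction (□ and ■ both read as the box). -/
def LHSModel.sat1 (M : LHSModel) : M.W → LHSForm → Prop
  | w, .pl i => M.Vl i w
  | w, .pr i => M.Vr i w
  | _, .I => True
  | w, .neg φ => ¬ M.sat1 w φ
  | w, .and φ ψ => M.sat1 w φ ∧ M.sat1 w ψ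
  | w, .box φ => ∀ v, M.R w v → M.sat1 v φ
  | w, .bbox φ => ∀ v, M.R w v → M.sat1 v φ

lemma left_indep {M : LHSModel} {φ : LHSForm} (h : IsLeft φ) :
    ∀ (s t t' : M.W), M.sat s t φ ↔ M.sat s t' φ := by
  induction h with
  | pl i => intro s t t'; simp [LHSModel.sat]
  | neg _ ih => intro s t t'; simp [LHSModel.sat, ih s t t']
  | and _ _ ih1 ih2 => intro s t t'; simp [LHSModel.sat, ih1 s t t', ih2 s t t']
  | box _ ih =>
      intro s t t'
      simp only [LHSModel.sat]
      exact forall_congr' fun s' => imp_congr Iff.rfl (ih s' t t')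

lemma right_indep {M : LHSModel} {ψ : LHSForm} (h : IsRight ψ) :
    ∀ (s s' t : M.W), M.sat s t ψ ↔ M.sat s' t ψ := by
  induction h with
  | pr i => intro s s' t; simp [LHSModel.sat]
  | neg _ ih => intro s s' t; simp [LHSModel.sat, ih s s' t]
  | and _ _ ih1 ih2 => intro s s' t; simp [LHSModel.sat, ih1 s s' t, ih2 s s' t]
  | bbox _ ih =>
      intro s s' t
      simp only [LHSModel.sat]
      exact forall_congr' fun t' => imp_congr Iff.rfl (ih s s' t')

/-- Validity of the splitting axioms: for all φ ∈ L_□ and ψ ∈ L_■, the formulas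
□(φ∨ψ) ↔ (□φ∨ψ) and ■(φ∨ψ) ↔ (φ∨■ψ) are valid in all LHS models. -/
theorem splitting_axioms_valid (φ ψ : LHSForm) (hφ : IsLeft φ) (hψ : IsRight ψ)
    (M : LHSModel) (s t : M.W) :
    (M.sat s t ((φ.or ψ).box) ↔ M.sat s t ((φ.box).or ψ)) ∧
    (M.sat s t ((φ.or ψ).bbox) ↔ M.sat s t (φ.or (ψ.bbox))) := by
  constructor
  · simp only [LHSForm.or, LHSModel.sat, not_and_or, not_not]
    constructor
    · intro h
      by_cases hψ' : M.sat s t ψ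
      · exact Or.inr hψ'
      · refine Or.inl fun s' hR => ?_
        rcases h s' hR with h1 | h2
        · exact h1
        · exact absurd ((right_indep hψ s' s t).mp h2) hψ'
    · rintro (h | h) s' hR
      · exact Or.inl (h s' hR)
      · exact Or.inr ((right_indep hψ s s' t).mp h)
  · simp only [LHSForm.or, LHSModel.sat, not_and_or, not_not]
    constructor
    · intro h
      by_cases hφ' : M.sat s t φ
      · exact Or.inl hφ'
      · refine Or.inr fun t' hR => ?_
        rcases h t' hR with h1 | h2
        · exact absurd ((left_indep hφ s t' t).mp h1) hφ'
        · exact h2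
    · rintro (h | h) t' hR
      · exact Or.inl ((left_indep hφ s t t').mp h)
      · exact Or.inr (h t' hR)
end

section
/- Frame definability of confluence in LHS: a frame F=(W,R) validates the LHS formula I → □■◇◆I (at all pairs of states, under all valuations) if and only if R is confluent, i.e., for all x,y₁,y₂ ∈ W, if Rxy₁ and Rxy₂ then there exists z with Ry₁z and Ry₂z. -/
/-- Frame definability of confluence: a frame (W,R) validates the LHS formula
I → □■◇◆I at all pairs of states under all valuations iff R is confluent. -/
theorem confluence_definability (W : Type) (R : W → W → Prop) :
    (∀ (Vl Vr : ℕ → W → Prop) (s t : W),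
        LHSModel.sat { W := W, R := R, Vl := Vl, Vr := Vr } s t
          (LHSForm.I.imp ((LHSForm.I.bdia.dia).bbox.box))) ↔
    (∀ x y₁ y₂ : W, R x y₁ → R x y₂ → ∃ z, R y₁ z ∧ R y₂ z) := by
  simp only [LHSForm.imp, LHSForm.dia, LHSForm.bdia, LHSModel.sat]
  constructor
  · intro h x y₁ y₂ h1 h2
    have := h (fun _ _ => True) (fun _ _ => True) x x
    push_neg at this
    rcases this rfl y₁ h1 y₂ h2 with ⟨z, hz, w, hw, he⟩
    exact ⟨z, hz, he ▸ hw⟩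
  · intro hc Vl Vr s t
    intro ⟨hst, hb⟩
    subst hst
    apply hb
    intro y₁ h1 y₂ h2
    rcases hc s y₁ y₂ h1 h2 with ⟨z, hz1, hz2⟩
    intro hnot
    exact hnot z hz1 (fun h => h z hz2 rfl)
end

section
/- Modal equivalence between pointed LHS models can be upgraded to bisimilarity via ultrapowers: if ⟨M,a,b⟩ and ⟨N,w,u⟩ satisfy the same LHS formulas, and U is an incomplete ultrafilter over ℕ, then ⟨∏_U M,(f_a)_U,(f_b)_U⟩ and ⟨∏_U N,(f_w)_U,(f_u)_U⟩ are LHS-bisimilar. -/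
/-- An ultrafilter is incomplete if it is not closed under countable intersections. -/
def Ultrafilter.Incomplete {ι : Type} (U : Ultrafilter ι) : Prop :=
  ∃ s : ℕ → Set ι, (∀ n, s n ∈ U) ∧ (⋂ n, s n) ∉ U

def upSetoid (M : LHSModel) {ι : Type} (U : Ultrafilter ι) : Setoid (ι → M.W) where
  r f g := {i | f i = g i} ∈ U
  iseqv := by
    refine ⟨fun f => ?_, fun {f g} h => ?_, fun {f g h} h1 h2 => ?_⟩
    · have : {i | f i = f i} = Set.univ := by ext i; simp
      rw [this]; exact Filter.univ_mem
    · exact Filter.mem_of_superset h (fun i hi => (Set.mem_setOf_eq ▸ hi).symm)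
    · exact Filter.mem_of_superset (Filter.inter_mem h1 h2)
        (fun i hi => hi.1.trans hi.2)

/-- The ultrapower ∏_U M of an LHS model modulo an ultrafilter U. -/
def LHSModel.ultrapower (M : LHSModel) {ι : Type} (U : Ultrafilter ι) : LHSModel where
  W := Quotient (upSetoid M U)
  R a b := Quotient.liftOn₂ a b (fun f g => {i | M.R (f i) (g i)} ∈ U)
    (by
      intro f g f' g' hf hg
      have h1 : {i | f i = f' i} ∈ U := hf
      have h2 : {i | g i = g' i} ∈ U := hg
      apply propext
      constructor <;> intro h
      · refine Filter.mem_of_superset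
          (Filter.inter_mem h (Filter.inter_mem h1 h2)) (fun i hi => ?_)
        have h3 : M.R (f i) (g i) := hi.1
        have e1 : f i = f' i := hi.2.1
        have e2 : g i = g' i := hi.2.2
        show M.R (f' i) (g' i)
        rw [← e1, ← e2]; exact h3
      · refine Filter.mem_of_superset
          (Filter.inter_mem h (Filter.inter_mem h1 h2)) (fun i hi => ?_)
        have h3 : M.R (f' i) (g' i) := hi.1
        have e1 : f i = f' i := hi.2.1
        have e2 : g i = g' i := hi.2.2
        show M.R (f i) (g i)
        rw [e1, e2]; exact h3)
  Vl i a := Quotient.liftOn a (fun f => {j | M.Vl i (f j)} ∈ U)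
    (by
      intro f f' hf
      have h1 : {j | f j = f' j} ∈ U := hf
      apply propext
      constructor <;> intro h
      · refine Filter.mem_of_superset (Filter.inter_mem h h1) (fun j hj => ?_)
        have h3 : M.Vl i (f j) := hj.1
        have e : f j = f' j := hj.2
        show M.Vl i (f' j); rw [← e]; exact h3
      · refine Filter.mem_of_superset (Filter.inter_mem h h1) (fun j hj => ?_)
        have h3 : M.Vl i (f' j) := hj.1
        have e : f j = f' j := hj.2
        show M.Vl i (f j); rw [e]; exact h3)
  Vr i a := Quotient.liftOn a (fun f => {j | M.Vr i (f j)} ∈ U)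
    (by
      intro f f' hf
      have h1 : {j | f j = f' j} ∈ U := hf
      apply propext
      constructor <;> intro h
      · refine Filter.mem_of_superset (Filter.inter_mem h h1) (fun j hj => ?_)
        have h3 : M.Vr i (f j) := hj.1
        have e : f j = f' j := hj.2
        show M.Vr i (f' j); rw [← e]; exact h3
      · refine Filter.mem_of_superset (Filter.inter_mem h h1) (fun j hj => ?_)
        have h3 : M.Vr i (f' j) := hj.1
        have e : f j = f' j := hj.2
        show M.Vr i (f j); rw [e]; exact h3)

/-- The point of the ultrapower determined by the constant function with value w. -/
def LHSModel.constPt (M : LHSModel) {ι : Type} (U : Ultrafilter ι) (w : M.W) :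
    (M.ultrapower U).W :=
  Quotient.mk (upSetoid M U) (fun _ => w)


section Aux
open Classical

/-- A tautology. -/
def fTop : LHSForm := .neg (.and .I (.neg .I))

lemma sat_fTop (M : LHSModel) (s t : M.W) : M.sat s t fTop := by
  simp only [fTop, LHSModel.sat]
  tauto

def conjList : List LHSForm → LHSForm
  | [] => fTop
  | φ :: L => .and φ (conjList L)

lemma sat_conjList (M : LHSModel) (s t : M.W) (L : List LHSForm) :
    M.sat s t (conjList L) ↔ ∀ φ ∈ L, M.sat s t φ := by
  induction L with
  | nil => simpa [conjList] using sat_fTop M s t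
  | cons ψ L ih =>
      simp only [conjList, LHSModel.sat, ih, List.mem_cons]
      constructor
      · rintro ⟨h1, h2⟩ φ (rfl | hφ)
        · exact h1
        · exact h2 φ hφ
      · intro hh
        exact ⟨hh ψ (Or.inl rfl), fun φ hφ => hh φ (Or.inr hφ)⟩

lemma sat_dia (M : LHSModel) (s t : M.W) (φ : LHSForm) :
    M.sat s t φ.dia ↔ ∃ s', M.R s s' ∧ M.sat s' t φ := by
  simp only [LHSForm.dia, LHSModel.sat, not_forall]
  push_neg
  simp [not_not]

lemma sat_bdia (M : LHSModel) (s t : M.W) (φ : LHSForm) :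
    M.sat s t φ.bdia ↔ ∃ t', M.R t t' ∧ M.sat s t' φ := by
  simp only [LHSForm.bdia, LHSModel.sat, not_forall]
  push_neg
  simp [not_not]

def LHSenc : LHSForm → ℕ
  | .pl i => Nat.pair 0 i
  | .pr i => Nat.pair 1 i
  | .I => Nat.pair 2 0
  | .neg φ => Nat.pair 3 (LHSenc φ)
  | .and φ ψ => Nat.pair 4 (Nat.pair (LHSenc φ) (LHSenc ψ))
  | .box φ => Nat.pair 5 (LHSenc φ)
  | .bbox φ => Nat.pair 6 (LHSenc φ)

lemma LHSenc_inj : Function.Injective LHSenc := by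
  intro φ
  induction φ with
  | pl i => intro ψ h; cases ψ <;> simp_all [LHSenc, Nat.pair_eq_pair]
  | pr i => intro ψ h; cases ψ <;> simp_all [LHSenc, Nat.pair_eq_pair]
  | I => intro ψ h; cases ψ <;> simp_all [LHSenc, Nat.pair_eq_pair]
  | neg φ ih =>
      intro ψ h; cases ψ <;> simp_all [LHSenc, Nat.pair_eq_pair]
      exact ih rfl
  | and φ1 φ2 ih1 ih2 =>
      intro ψ h; cases ψ <;> simp_all [LHSenc, Nat.pair_eq_pair]
      exact ⟨ih1 rfl, ih2 rfl⟩
  | box φ ih =>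
      intro ψ h; cases ψ <;> simp_all [LHSenc, Nat.pair_eq_pair]
      exact ih rfl
  | bbox φ ih =>
      intro ψ h; cases ψ <;> simp_all [LHSenc, Nat.pair_eq_pair]
      exact ih rfl

instance : Countable LHSForm := ⟨⟨LHSenc, LHSenc_inj⟩⟩
instance : Nonempty LHSForm := ⟨.I⟩

/-- Łoś's theorem for LHS ultrapowers. -/
lemma los (M : LHSModel) (U : Ultrafilter ℕ) (φ : LHSForm) :
    ∀ f g : ℕ → M.W,
      (M.ultrapower U).sat (Quotient.mk (upSetoid M U) f) (Quotient.mk (upSetoid M U) g) φ ↔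
        {i | M.sat (f i) (g i) φ} ∈ U := by
  induction φ with
  | pl i => intro f g; exact Iff.rfl
  | pr i => intro f g; exact Iff.rfl
  | I => intro f g; exact ⟨fun h => Quotient.exact h, fun h => Quotient.sound h⟩
  | neg φ ih =>
      intro f g
      constructor
      · intro h
        exact Ultrafilter.eventually_not.mpr (fun hm => h ((ih f g).mpr hm))
      · intro h hsat
        exact Ultrafilter.eventually_not.mp h ((ih f g).mp hsat)
  | and φ ψ ih1 ih2 =>
      intro f g
      constructor
      · intro h
        exact Filter.inter_mem ((ih1 f g).mp h.1) ((ih2 f g).mp h.2)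
      · intro h
        refine ⟨(ih1 f g).mpr ?_, (ih2 f g).mpr ?_⟩
        · exact Filter.mem_of_superset h (fun i hi => hi.1)
        · exact Filter.mem_of_superset h (fun i hi => hi.2)
  | box φ ih =>
      intro f g
      constructor
      · intro h
        by_contra hc
        have hset : {i | ¬ ∀ s', M.R (f i) s' → M.sat s' (g i) φ} ∈ U :=
          Ultrafilter.eventually_not.mpr hc
        have hset2 : {i | ∃ s', M.R (f i) s' ∧ ¬ M.sat s' (g i) φ} ∈ U := by
          refine Filter.mem_of_superset hset (fun i hi => ?_)
          push_neg at hi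
          exact hi
        have hch : ∀ i, ∃ y : M.W, (∃ s', M.R (f i) s' ∧ ¬ M.sat s' (g i) φ) →
            M.R (f i) y ∧ ¬ M.sat y (g i) φ := by
          intro i
          by_cases hc2 : ∃ s', M.R (f i) s' ∧ ¬ M.sat s' (g i) φ
          · exact ⟨hc2.choose, fun _ => hc2.choose_spec⟩
          · exact ⟨f i, fun hx => absurd hx hc2⟩
        choose h0 hh0 using hch
        have hRset : {i | M.R (f i) (h0 i)} ∈ U :=
          Filter.mem_of_superset hset2 (fun i hi => (hh0 i hi).1)
        have hsat := h (Quotient.mk (upSetoid M U) h0) hRset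
        have hsat2 := (ih h0 g).mp hsat
        have hbad : {i | ¬ M.sat (h0 i) (g i) φ} ∈ U :=
          Filter.mem_of_superset hset2 (fun i hi => (hh0 i hi).2)
        exact (Ultrafilter.eventually_not.mp hbad) hsat2
      · intro hA s' hRs'
        obtain ⟨h0, rfl⟩ := Quotient.exists_rep s'
        have hB : {i | M.R (f i) (h0 i)} ∈ U := hRs'
        refine (ih h0 g).mpr ?_
        refine Filter.mem_of_superset (Filter.inter_mem hA hB) (fun i hi => ?_)
        exact hi.1 _ hi.2
  | bbox φ ih =>
      intro f g
      constructor
      · intro h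
        by_contra hc
        have hset : {i | ¬ ∀ t', M.R (g i) t' → M.sat (f i) t' φ} ∈ U :=
          Ultrafilter.eventually_not.mpr hc
        have hset2 : {i | ∃ t', M.R (g i) t' ∧ ¬ M.sat (f i) t' φ} ∈ U := by
          refine Filter.mem_of_superset hset (fun i hi => ?_)
          push_neg at hi
          exact hi
        have hch : ∀ i, ∃ y : M.W, (∃ t', M.R (g i) t' ∧ ¬ M.sat (f i) t' φ) →
            M.R (g i) y ∧ ¬ M.sat (f i) y φ := by
          intro i
          by_cases hc2 : ∃ t', M.R (g i) t' ∧ ¬ M.sat (f i) t' φ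
          · exact ⟨hc2.choose, fun _ => hc2.choose_spec⟩
          · exact ⟨g i, fun hx => absurd hx hc2⟩
        choose h0 hh0 using hch
        have hRset : {i | M.R (g i) (h0 i)} ∈ U :=
          Filter.mem_of_superset hset2 (fun i hi => (hh0 i hi).1)
        have hsat := h (Quotient.mk (upSetoid M U) h0) hRset
        have hsat2 := (ih f h0).mp hsat
        have hbad : {i | ¬ M.sat (f i) (h0 i) φ} ∈ U :=
          Filter.mem_of_superset hset2 (fun i hi => (hh0 i hi).2)
        exact (Ultrafilter.eventually_not.mp hbad) hsat2
      · intro hA t' hRt'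
        obtain ⟨h0, rfl⟩ := Quotient.exists_rep t'
        have hB : {i | M.R (g i) (h0 i)} ∈ U := hRt'
        refine (ih f h0).mpr ?_
        refine Filter.mem_of_superset (Filter.inter_mem hA hB) (fun i hi => ?_)
        exact hi.1 _ hi.2

lemma los_const (M : LHSModel) (U : Ultrafilter ℕ) (a b : M.W) (φ : LHSForm) :
    (M.ultrapower U).sat (M.constPt U a) (M.constPt U b) φ ↔ M.sat a b φ := by
  rw [LHSModel.constPt, LHSModel.constPt, los]
  exact Filter.eventually_const

end Aux


section Forth
open Classical

/-- Forth clause for the left coordinate, via countable saturation. -/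
lemma forth_left (M N : LHSModel) (U : Ultrafilter ℕ) (hU : U.Incomplete)
    (f g : ℕ → M.W) (f' g' : ℕ → N.W)
    (hZ : ∀ φ, (M.ultrapower U).sat (Quotient.mk (upSetoid M U) f)
                 (Quotient.mk (upSetoid M U) g) φ ↔
               (N.ultrapower U).sat (Quotient.mk (upSetoid N U) f')
                 (Quotient.mk (upSetoid N U) g') φ)
    (h : ℕ → M.W) (hR : {i | M.R (f i) (h i)} ∈ U) :
    ∃ h' : ℕ → N.W, ({i | N.R (f' i) (h' i)} ∈ U) ∧
      ∀ φ, (M.ultrapower U).sat (Quotient.mk (upSetoid M U) h)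
             (Quotient.mk (upSetoid M U) g) φ ↔
           (N.ultrapower U).sat (Quotient.mk (upSetoid N U) h')
             (Quotient.mk (upSetoid N U) g') φ := by
  classical
  obtain ⟨e, he⟩ := exists_surjective_nat LHSForm
  obtain ⟨S, hS, hSI⟩ := hU
  set χ : ℕ → LHSForm := fun n => conjList ((List.range (n+1)).map
    (fun k => if (M.ultrapower U).sat (Quotient.mk (upSetoid M U) h)
        (Quotient.mk (upSetoid M U) g) (e k) then e k else fTop)) with hχ
  have hχsat : ∀ n, (M.ultrapower U).sat (Quotient.mk (upSetoid M U) h)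
      (Quotient.mk (upSetoid M U) g) (χ n) := by
    intro n
    rw [hχ]; refine (sat_conjList _ _ _ _).mpr ?_
    intro φ hφ
    simp only [List.mem_map, List.mem_range] at hφ
    obtain ⟨k, _, rfl⟩ := hφ
    by_cases hΓ : (M.ultrapower U).sat (Quotient.mk (upSetoid M U) h)
        (Quotient.mk (upSetoid M U) g) (e k)
    · rw [if_pos hΓ]; exact hΓ
    · rw [if_neg hΓ]; exact sat_fTop _ _ _
  set B : ℕ → Set ℕ := fun n => {i | ∃ y, N.R (f' i) y ∧ N.sat y (g' i) (χ n)} with hB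
  have hdia : ∀ n, B n ∈ U := by
    intro n
    have h1 : (M.ultrapower U).sat (Quotient.mk (upSetoid M U) f)
        (Quotient.mk (upSetoid M U) g) ((χ n).dia) := by
      refine (sat_dia _ _ _ _).mpr ?_
      exact ⟨Quotient.mk (upSetoid M U) h, hR, hχsat n⟩
    have h2 := (hZ _).mp h1
    have h3 := (los N U ((χ n).dia) f' g').mp h2
    refine Filter.mem_of_superset h3 (fun i hi => ?_)
    exact (sat_dia N _ _ _).mp hi
  set Y : ℕ → Set ℕ := fun n =>
    {i | (∀ k ≤ n, i ∈ S k ∧ i ∈ B k) ∧ i ∉ ⋂ k, S k} with hY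
  have hYU : ∀ n, Y n ∈ U := by
    intro n
    have heq2 : Y n = (⋂ k ∈ Set.Iic n, (S k ∩ B k)) ∩ (⋂ k, S k)ᶜ := by
      ext i
      simp only [hY, Set.mem_setOf_eq, Set.mem_inter_iff, Set.mem_iInter,
        Set.mem_compl_iff, Set.mem_Iic]
      try tauto
    rw [heq2]
    refine Filter.inter_mem ?_ (Ultrafilter.compl_mem_iff_notMem.mpr hSI)
    exact (Filter.biInter_mem (Set.finite_Iic n)).mpr
      (fun k _ => Filter.inter_mem (hS k) (hdia k))
  have hYanti : ∀ m n : ℕ, m ≤ n → Y n ⊆ Y m := by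
    intro m n hmn i hi
    exact ⟨fun k hk => hi.1 k (hk.trans hmn), hi.2⟩
  have hex : ∀ i, ∃ n, i ∉ Y n := by
    intro i
    by_contra hc
    push_neg at hc
    have h1 : ∀ k, i ∈ S k := fun k => ((hc k).1 k le_rfl).1
    exact (hc 0).2 (Set.mem_iInter.mpr h1)
  set m : ℕ → ℕ := fun i => Nat.find (hex i) - 1 with hm
  have hmem : ∀ i, i ∈ Y 0 → i ∈ Y (m i) := by
    intro i hi
    have h0 : 0 < Nat.find (hex i) := by
      rcases Nat.eq_zero_or_pos (Nat.find (hex i)) with h | h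
      · exact absurd hi (h ▸ Nat.find_spec (hex i))
      · exact h
    have hlt : m i < Nat.find (hex i) := by
      simp only [hm]; omega
    exact not_not.mp (Nat.find_min (hex i) hlt)
  have hle : ∀ i k, i ∈ Y k → k ≤ m i := by
    intro i k hik
    have hk : k < Nat.find (hex i) := by
      by_contra hc
      push_neg at hc
      exact Nat.find_spec (hex i) (hYanti _ _ hc hik)
    simp only [hm]; omega
  have hBmem : ∀ i, i ∈ Y 0 → ∃ y, N.R (f' i) y ∧ N.sat y (g' i) (χ (m i)) :=
    fun i hi => ((hmem i hi).1 (m i) le_rfl).2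
  refine ⟨fun i => if hi : i ∈ Y 0 then (hBmem i hi).choose else f' i, ?_, ?_⟩
  · refine Filter.mem_of_superset (hYU 0) (fun i hi => ?_)
    show N.R (f' i) (dite (i ∈ Y 0) (fun hi => (hBmem i hi).choose) (fun _ => f' i))
    rw [dif_pos hi]
    exact (hBmem i hi).choose_spec.1
  have hfwd : ∀ φ, (M.ultrapower U).sat (Quotient.mk (upSetoid M U) h)
      (Quotient.mk (upSetoid M U) g) φ →
      (N.ultrapower U).sat
        (Quotient.mk (upSetoid N U) (fun i => if hi : i ∈ Y 0 then (hBmem i hi).choose else f' i))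
        (Quotient.mk (upSetoid N U) g') φ := by
    intro φ hφ
    obtain ⟨k, rfl⟩ := he φ
    refine (los N U (e k) _ g').mpr ?_
    refine Filter.mem_of_superset (hYU k) (fun i hi => ?_)
    have hi0 : i ∈ Y 0 := hYanti 0 k (Nat.zero_le k) hi
    have hk : k ≤ m i := hle i k hi
    show N.sat (dite (i ∈ Y 0) (fun hi => (hBmem i hi).choose) (fun _ => f' i)) (g' i) (e k)
    rw [dif_pos hi0]
    have hs := (hBmem i hi0).choose_spec.2
    rw [sat_conjList] at hs
    refine hs (e k) ?_
    exact List.mem_map.mpr ⟨k, List.mem_range.mpr (by omega), by rw [if_pos hφ]⟩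
  intro φ
  refine ⟨hfwd φ, fun hφ => ?_⟩
  by_contra hc
  exact hfwd φ.neg hc hφ

/-- Forth clause for the right coordinate. -/
lemma forth_right (M N : LHSModel) (U : Ultrafilter ℕ) (hU : U.Incomplete)
    (f g : ℕ → M.W) (f' g' : ℕ → N.W)
    (hZ : ∀ φ, (M.ultrapower U).sat (Quotient.mk (upSetoid M U) f)
                 (Quotient.mk (upSetoid M U) g) φ ↔
               (N.ultrapower U).sat (Quotient.mk (upSetoid N U) f')
                 (Quotient.mk (upSetoid N U) g') φ)
    (h : ℕ → M.W) (hR : {i | M.R (g i) (h i)} ∈ U) :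
    ∃ h' : ℕ → N.W, ({i | N.R (g' i) (h' i)} ∈ U) ∧
      ∀ φ, (M.ultrapower U).sat (Quotient.mk (upSetoid M U) f)
             (Quotient.mk (upSetoid M U) h) φ ↔
           (N.ultrapower U).sat (Quotient.mk (upSetoid N U) f')
             (Quotient.mk (upSetoid N U) h') φ := by
  classical
  obtain ⟨e, he⟩ := exists_surjective_nat LHSForm
  obtain ⟨S, hS, hSI⟩ := hU
  set χ : ℕ → LHSForm := fun n => conjList ((List.range (n+1)).map
    (fun k => if (M.ultrapower U).sat (Quotient.mk (upSetoid M U) f)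
        (Quotient.mk (upSetoid M U) h) (e k) then e k else fTop)) with hχ
  have hχsat : ∀ n, (M.ultrapower U).sat (Quotient.mk (upSetoid M U) f)
      (Quotient.mk (upSetoid M U) h) (χ n) := by
    intro n
    rw [hχ]; refine (sat_conjList _ _ _ _).mpr ?_
    intro φ hφ
    simp only [List.mem_map, List.mem_range] at hφ
    obtain ⟨k, _, rfl⟩ := hφ
    by_cases hΓ : (M.ultrapower U).sat (Quotient.mk (upSetoid M U) f)
        (Quotient.mk (upSetoid M U) h) (e k)
    · rw [if_pos hΓ]; exact hΓ
    · rw [if_neg hΓ]; exact sat_fTop _ _ _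
  set B : ℕ → Set ℕ := fun n => {i | ∃ y, N.R (g' i) y ∧ N.sat (f' i) y (χ n)} with hB
  have hdia : ∀ n, B n ∈ U := by
    intro n
    have h1 : (M.ultrapower U).sat (Quotient.mk (upSetoid M U) f)
        (Quotient.mk (upSetoid M U) g) ((χ n).bdia) := by
      refine (sat_bdia _ _ _ _).mpr ?_
      exact ⟨Quotient.mk (upSetoid M U) h, hR, hχsat n⟩
    have h2 := (hZ _).mp h1
    have h3 := (los N U ((χ n).bdia) f' g').mp h2
    refine Filter.mem_of_superset h3 (fun i hi => ?_)
    exact (sat_bdia N _ _ _).mp hi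
  set Y : ℕ → Set ℕ := fun n =>
    {i | (∀ k ≤ n, i ∈ S k ∧ i ∈ B k) ∧ i ∉ ⋂ k, S k} with hY
  have hYU : ∀ n, Y n ∈ U := by
    intro n
    have heq2 : Y n = (⋂ k ∈ Set.Iic n, (S k ∩ B k)) ∩ (⋂ k, S k)ᶜ := by
      ext i
      simp only [hY, Set.mem_setOf_eq, Set.mem_inter_iff, Set.mem_iInter,
        Set.mem_compl_iff, Set.mem_Iic]
      try tauto
    rw [heq2]
    refine Filter.inter_mem ?_ (Ultrafilter.compl_mem_iff_notMem.mpr hSI)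
    exact (Filter.biInter_mem (Set.finite_Iic n)).mpr
      (fun k _ => Filter.inter_mem (hS k) (hdia k))
  have hYanti : ∀ m n : ℕ, m ≤ n → Y n ⊆ Y m := by
    intro m n hmn i hi
    exact ⟨fun k hk => hi.1 k (hk.trans hmn), hi.2⟩
  have hex : ∀ i, ∃ n, i ∉ Y n := by
    intro i
    by_contra hc
    push_neg at hc
    have h1 : ∀ k, i ∈ S k := fun k => ((hc k).1 k le_rfl).1
    exact (hc 0).2 (Set.mem_iInter.mpr h1)
  set m : ℕ → ℕ := fun i => Nat.find (hex i) - 1 with hm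
  have hmem : ∀ i, i ∈ Y 0 → i ∈ Y (m i) := by
    intro i hi
    have h0 : 0 < Nat.find (hex i) := by
      rcases Nat.eq_zero_or_pos (Nat.find (hex i)) with h | h
      · exact absurd hi (h ▸ Nat.find_spec (hex i))
      · exact h
    have hlt : m i < Nat.find (hex i) := by
      simp only [hm]; omega
    exact not_not.mp (Nat.find_min (hex i) hlt)
  have hle : ∀ i k, i ∈ Y k → k ≤ m i := by
    intro i k hik
    have hk : k < Nat.find (hex i) := by
      by_contra hc
      push_neg at hc
      exact Nat.find_spec (hex i) (hYanti _ _ hc hik)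
    simp only [hm]; omega
  have hBmem : ∀ i, i ∈ Y 0 → ∃ y, N.R (g' i) y ∧ N.sat (f' i) y (χ (m i)) :=
    fun i hi => ((hmem i hi).1 (m i) le_rfl).2
  refine ⟨fun i => if hi : i ∈ Y 0 then (hBmem i hi).choose else g' i, ?_, ?_⟩
  · refine Filter.mem_of_superset (hYU 0) (fun i hi => ?_)
    show N.R (g' i) (dite (i ∈ Y 0) (fun hi => (hBmem i hi).choose) (fun _ => g' i))
    rw [dif_pos hi]
    exact (hBmem i hi).choose_spec.1
  have hfwd : ∀ φ, (M.ultrapower U).sat (Quotient.mk (upSetoid M U) f)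
      (Quotient.mk (upSetoid M U) h) φ →
      (N.ultrapower U).sat (Quotient.mk (upSetoid N U) f')
        (Quotient.mk (upSetoid N U) (fun i => if hi : i ∈ Y 0 then (hBmem i hi).choose else g' i))
        φ := by
    intro φ hφ
    obtain ⟨k, rfl⟩ := he φ
    refine (los N U (e k) f' _).mpr ?_
    refine Filter.mem_of_superset (hYU k) (fun i hi => ?_)
    have hi0 : i ∈ Y 0 := hYanti 0 k (Nat.zero_le k) hi
    have hk : k ≤ m i := hle i k hi
    show N.sat (f' i) (dite (i ∈ Y 0) (fun hi => (hBmem i hi).choose) (fun _ => g' i)) (e k)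
    rw [dif_pos hi0]
    have hs := (hBmem i hi0).choose_spec.2
    rw [sat_conjList] at hs
    refine hs (e k) ?_
    exact List.mem_map.mpr ⟨k, List.mem_range.mpr (by omega), by rw [if_pos hφ]⟩
  intro φ
  refine ⟨hfwd φ, fun hφ => ?_⟩
  by_contra hc
  exact hfwd φ.neg hc hφ

end Forth

/-- Modal equivalence between pointed LHS models can be upgraded to
bisimilarity via ultrapowers: if ⟨M,a,b⟩ and ⟨N,w,u⟩ satisfy the same LHS
formulas and U is an incomplete ultrafilter over ℕ, then the ultrapowers
⟨∏_U M,(f_a)_U,(f_b)_U⟩ and ⟨∏_U N,(f_w)_U,(f_u)_U⟩ are LHS-bisimilar. -/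
theorem modal_equivalence_ultrapowers_bisimilar (M N : LHSModel)
    (a b : M.W) (w u : N.W) (U : Ultrafilter ℕ) (hU : U.Incomplete)
    (heq : ∀ φ : LHSForm, M.sat a b φ ↔ N.sat w u φ) :
    ∃ Z : (M.ultrapower U).W × (M.ultrapower U).W →
          (N.ultrapower U).W × (N.ultrapower U).W → Prop,
      IsBisim (M.ultrapower U) (N.ultrapower U) Z ∧
      Z (M.constPt U a, M.constPt U b) (N.constPt U w, N.constPt U u) := by
  classical
  refine ⟨fun p q => ∀ φ, (M.ultrapower U).sat p.1 p.2 φ ↔ (N.ultrapower U).sat q.1 q.2 φ,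
    ?_, ?_⟩
  · intro s t s' t' hZ
    obtain ⟨f, rfl⟩ := Quotient.exists_rep s
    obtain ⟨g, rfl⟩ := Quotient.exists_rep t
    obtain ⟨f', rfl⟩ := Quotient.exists_rep s'
    obtain ⟨g', rfl⟩ := Quotient.exists_rep t'
    refine ⟨fun i => ?_, fun i => ?_, ?_, ?_, ?_, ?_, ?_⟩
    · exact hZ (.pl i)
    · exact hZ (.pr i)
    · exact hZ .I
    · intro v hv
      obtain ⟨hfn, rfl⟩ := Quotient.exists_rep v
      obtain ⟨h', hR', hEq⟩ := forth_left M N U hU f g f' g' hZ hfn hv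
      exact ⟨Quotient.mk (upSetoid N U) h', hR', hEq⟩
    · intro v hv
      obtain ⟨hfn, rfl⟩ := Quotient.exists_rep v
      obtain ⟨h', hR', hEq⟩ := forth_right M N U hU f g f' g' hZ hfn hv
      exact ⟨Quotient.mk (upSetoid N U) h', hR', hEq⟩
    · intro v' hv'
      obtain ⟨hfn, rfl⟩ := Quotient.exists_rep v'
      obtain ⟨h0, hR0, hEq⟩ := forth_left N M U hU f' g' f g (fun φ => (hZ φ).symm) hfn hv'
      exact ⟨Quotient.mk (upSetoid M U) h0, hR0, fun φ => (hEq φ).symm⟩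
    · intro v' hv'
      obtain ⟨hfn, rfl⟩ := Quotient.exists_rep v'
      obtain ⟨h0, hR0, hEq⟩ := forth_right N M U hU f' g' f g (fun φ => (hZ φ).symm) hfn hv'
      exact ⟨Quotient.mk (upSetoid M U) h0, hR0, fun φ => (hEq φ).symm⟩
  · intro φ
    rw [los_const, los_const]
    exact heq φ
end
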